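/- Let X_0 = x_0 x_0^T with ||x_0||_2 = 1 and let X be a positive semidefinite matrix with ||X − X_0||_op ≤ C_0 ε, where ε ≥ 0. If v is a unit-norm eigenvector of X corresponding to its largest eigenvalue, then ||X_0 − v v^T||_op ≤ 2 C_0 ε. -/

import Mathlib

open Matrix
open scoped RealInnerProductSpace

/-- Spectral (operator) norm of a real square matrix. -/
noncomputable def opNorm {n : ℕ} (M : Matrix (Fin n) (Fin n) ℝ) : ℝ :=
  ‖LinearMap.toContinuousLinearMap (Matrix.toEuclideanLin M)‖

lemma opNorm_nonneg' {n : ℕ} (M : Matrix (Fin n) (Fin n) ℝ) : 0 ≤ opNorm M := norm_nonneg _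

lemma euc_norm_symm {n : ℕ} (w : Fin n → ℝ) :
    ‖(WithLp.equiv 2 (Fin n → ℝ)).symm w‖ = Real.sqrt (∑ i, (w i)^2) := by
  rw [EuclideanSpace.norm_eq]
  congr 1
  exact Finset.sum_congr rfl fun i _ => by simp [sq_abs]

lemma mulVec_sq_le {n : ℕ} (M : Matrix (Fin n) (Fin n) ℝ) (z : Fin n → ℝ) :
    ∑ i, (M.mulVec z i)^2 ≤ (opNorm M)^2 * ∑ i, (z i)^2 := by
  have h := (LinearMap.toContinuousLinearMap (Matrix.toEuclideanLin M)).le_opNorm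
      ((WithLp.equiv 2 (Fin n → ℝ)).symm z)
  have h1 : (LinearMap.toContinuousLinearMap (Matrix.toEuclideanLin M))
      ((WithLp.equiv 2 (Fin n → ℝ)).symm z) = (WithLp.equiv 2 (Fin n → ℝ)).symm (M.mulVec z) := rfl
  rw [h1, euc_norm_symm, euc_norm_symm] at h
  have h2 : Real.sqrt (∑ i, (M.mulVec z i)^2) ^ 2 ≤
      (opNorm M * Real.sqrt (∑ i, (z i)^2))^2 := by
    apply sq_le_sq' _ h
    have := Real.sqrt_nonneg (∑ i, (M.mulVec z i)^2)
    nlinarith [mul_nonneg (opNorm_nonneg' M) (Real.sqrt_nonneg (∑ i, (z i)^2))]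
  rw [Real.sq_sqrt (by positivity), mul_pow, Real.sq_sqrt (by positivity)] at h2
  exact h2

lemma opNorm_le_bound' {n : ℕ} (M : Matrix (Fin n) (Fin n) ℝ) (K : ℝ) (hK : 0 ≤ K)
    (h : ∀ z : Fin n → ℝ, ∑ i, (M.mulVec z i)^2 ≤ K^2 * ∑ i, (z i)^2) :
    opNorm M ≤ K := by
  apply ContinuousLinearMap.opNorm_le_bound _ hK
  intro x
  have h1 : (LinearMap.toContinuousLinearMap (Matrix.toEuclideanLin M)) x =
      (WithLp.equiv 2 (Fin n → ℝ)).symm (M.mulVec (WithLp.equiv 2 (Fin n → ℝ) x)) := rfl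
  have h2 : x = (WithLp.equiv 2 (Fin n → ℝ)).symm (WithLp.equiv 2 (Fin n → ℝ) x) := rfl
  rw [h1]
  nth_rewrite 2 [h2]
  rw [euc_norm_symm, euc_norm_symm]
  set z := WithLp.equiv 2 (Fin n → ℝ) x
  calc Real.sqrt (∑ i, (M.mulVec z i)^2) ≤ Real.sqrt (K^2 * ∑ i, (z i)^2) :=
        Real.sqrt_le_sqrt (h z)
    _ = K * Real.sqrt (∑ i, (z i)^2) := by
        rw [Real.sqrt_mul (by positivity), Real.sqrt_sq hK]

lemma rayleigh_le {n : ℕ} (X : Matrix (Fin n) (Fin n) ℝ) (hH : X.IsHermitian) (μ : ℝ)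
    (hmax : ∀ (ν : ℝ) (w : Fin n → ℝ), w ≠ 0 → X.mulVec w = ν • w → ν ≤ μ)
    (x0 : Fin n → ℝ) :
    ∑ i, x0 i * (X.mulVec x0) i ≤ μ * ∑ i, (x0 i)^2 := by
  classical
  set b := hH.eigenvectorBasis with hb
  set lam := hH.eigenvalues with hlam
  have hev : ∀ i, X.mulVec (b i) = lam i • (b i) := fun i => hH.mulVec_eigenvectorBasis i
  have hne : ∀ i, (b i : Fin n → ℝ) ≠ 0 := by
    intro i h
    exact hH.eigenvectorBasis.orthonormal.ne_zero i (by simpa using congrArg (WithLp.toLp 2) h)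
  have hle : ∀ i, lam i ≤ μ := fun i => hmax (lam i) (b i) (hne i) (hev i)
  set x : EuclideanSpace ℝ (Fin n) := (WithLp.equiv 2 (Fin n → ℝ)).symm x0 with hx
  set y : EuclideanSpace ℝ (Fin n) := (WithLp.equiv 2 (Fin n → ℝ)).symm (X.mulVec x0) with hy
  have key : ⟪x, y⟫ = ∑ i, ⟪x, b i⟫ * ⟪b i, y⟫ := (b.sum_inner_mul_inner x y).symm
  have hbiy : ∀ i, ⟪b i, y⟫ = lam i * ⟪b i, x⟫ := by
    intro i
    have h1 : ⟪b i, y⟫ = ∑ j, (b i : Fin n → ℝ) j * (X.mulVec x0) j := by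
      simp [PiLp.inner_apply, hy, RCLike.inner_apply]; exact Finset.sum_congr rfl fun j _ => mul_comm _ _
    have hXt : Xᵀ = X := by
      have h := hH; rwa [Matrix.IsHermitian, Matrix.conjTranspose_eq_transpose_of_trivial] at h
    have h2 : ∑ j, (b i : Fin n → ℝ) j * (X.mulVec x0) j
        = ∑ j, (X.mulVec (b i)) j * x0 j := by
      have hd := Matrix.dotProduct_mulVec (b i : Fin n → ℝ) X x0
      simp only [dotProduct] at hd
      rw [hd]
      have : (b i : Fin n → ℝ) ᵥ* X = X *ᵥ (b i : Fin n → ℝ) := by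
        rw [← Matrix.mulVec_transpose, hXt]
      rw [this]
    have h3 : ∑ j, (X.mulVec (b i)) j * x0 j = lam i * ∑ j, (b i : Fin n → ℝ) j * x0 j := by
      rw [hev i]
      rw [Finset.mul_sum]
      apply Finset.sum_congr rfl
      intro j _
      simp [Pi.smul_apply, smul_eq_mul]
      ring
    have h4 : ⟪b i, x⟫ = ∑ j, (b i : Fin n → ℝ) j * x0 j := by
      simp [PiLp.inner_apply, hx, RCLike.inner_apply]; exact Finset.sum_congr rfl fun j _ => mul_comm _ _
    rw [h1, h2, h3, h4]
  have hterm : ∀ i, ⟪x, b i⟫ * ⟪b i, y⟫ ≤ μ * (⟪x, b i⟫ * ⟪b i, x⟫) := by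
    intro i
    rw [hbiy i, real_inner_comm x (b i)]
    nlinarith [hle i, sq_nonneg (⟪b i, x⟫ : ℝ)]
  have hsum : ⟪x, y⟫ ≤ μ * ⟪x, x⟫ := by
    rw [key, ← b.sum_inner_mul_inner x x, Finset.mul_sum]
    exact Finset.sum_le_sum fun i _ => hterm i
  have hxy : ⟪x, y⟫ = ∑ i, x0 i * (X.mulVec x0) i := by
    simp [PiLp.inner_apply, hx, hy, RCLike.inner_apply]; exact Finset.sum_congr rfl fun j _ => mul_comm _ _
  have hxx : ⟪x, x⟫ = ∑ i, (x0 i)^2 := by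
    rw [hx, real_inner_self_eq_norm_sq, euc_norm_symm, Real.sq_sqrt (by positivity)]
  rwa [hxy, hxx] at hsum

lemma sum_sq_two {n : ℕ} (p q : Fin n → ℝ) (A B : ℝ) :
    ∑ i, (A * p i - B * q i)^2
      = A^2 * ∑ i, (p i)^2 + B^2 * ∑ i, (q i)^2 - 2*A*B * ∑ i, p i * q i := by
  simp only [Finset.mul_sum, ← Finset.sum_add_distrib, ← Finset.sum_sub_distrib]
  exact Finset.sum_congr rfl fun i _ => by ring

lemma sum_sq_three {n : ℕ} (p q r : Fin n → ℝ) (A B C : ℝ) :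
    ∑ i, (A * p i - B * q i - C * r i)^2
      = A^2 * ∑ i, (p i)^2 + B^2 * ∑ i, (q i)^2 + C^2 * ∑ i, (r i)^2
        - 2*A*B * ∑ i, p i * q i - 2*A*C * ∑ i, p i * r i + 2*B*C * ∑ i, q i * r i := by
  simp only [Finset.mul_sum, ← Finset.sum_add_distrib, ← Finset.sum_sub_distrib]
  exact Finset.sum_congr rfl fun i _ => by ring

/-- If `X ⪰ 0` with `‖X − x₀x₀ᵀ‖_op ≤ C₀ε` (`‖x₀‖ = 1`) and `v` is a unit-norm
eigenvector of `X` for its largest eigenvalue, then `‖x₀x₀ᵀ − vvᵀ‖_op ≤ 2C₀ε`. -/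
theorem leading_eigenvector_stability (n : ℕ) (x0 v : Fin n → ℝ) (C0 ε μ : ℝ)
    (hε : 0 ≤ ε)
    (hx0 : ∑ i, (x0 i) ^ 2 = 1) (hv : ∑ i, (v i) ^ 2 = 1)
    (X : Matrix (Fin n) (Fin n) ℝ) (hX : X.PosSemidef)
    (hclose : opNorm (X - vecMulVec x0 x0) ≤ C0 * ε)
    (heig : X.mulVec v = μ • v)
    (hmax : ∀ (ν : ℝ) (w : Fin n → ℝ), w ≠ 0 → X.mulVec w = ν • w → ν ≤ μ) :
    opNorm (vecMulVec x0 x0 - vecMulVec v v) ≤ 2 * C0 * ε := by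
  classical
  set r := C0 * ε with hrdef
  have hr0 : 0 ≤ r := le_trans (opNorm_nonneg' _) hclose
  set c := ∑ i, x0 i * v i with hcdef
  have hvx : ∑ i, v i * x0 i = c := by
    rw [hcdef]; exact Finset.sum_congr rfl fun i _ => by ring
  -- mulVec by the rank one matrices
  have hPz : ∀ w : Fin n → ℝ, (vecMulVec x0 x0).mulVec w = fun i => (∑ j, x0 j * w j) * x0 i := by
    intro w; funext i
    simp only [Matrix.mulVec, dotProduct, vecMulVec_apply]
    rw [Finset.sum_mul]
    exact Finset.sum_congr rfl fun j _ => by ring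
  have hQz : ∀ w : Fin n → ℝ, (vecMulVec v v).mulVec w = fun i => (∑ j, v j * w j) * v i := by
    intro w; funext i
    simp only [Matrix.mulVec, dotProduct, vecMulVec_apply]
    rw [Finset.sum_mul]
    exact Finset.sum_congr rfl fun j _ => by ring
  -- 1 - c² ≥ 0
  have hE1 : ∑ i, (1 * v i - c * x0 i)^2 = 1 - c^2 := by
    rw [sum_sq_two v x0 1 c, hv, hx0, hvx]; ring
  have ht0 : 0 ≤ 1 - c^2 := hE1 ▸ Finset.sum_nonneg fun i _ => sq_nonneg _
  -- μ² (1 - c²) ≤ r²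
  have hXPv : (X - vecMulVec x0 x0).mulVec v = fun i => μ * v i - c * x0 i := by
    funext i
    rw [Matrix.sub_mulVec]
    simp only [Pi.sub_apply, heig, hPz v, Pi.smul_apply, smul_eq_mul, ← hcdef]
  have hsq : ∑ i, ((X - vecMulVec x0 x0).mulVec v i)^2 ≤ r^2 := by
    have h := mulVec_sq_le (X - vecMulVec x0 x0) v
    rw [hv, mul_one] at h
    have : (opNorm (X - vecMulVec x0 x0))^2 ≤ r^2 :=
      pow_le_pow_left₀ (opNorm_nonneg' _) hclose 2
    linarith
  have hE3 : ∑ i, ((X - vecMulVec x0 x0).mulVec v i)^2 = μ^2 + c^2 - 2*μ*c^2 := by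
    rw [hXPv]
    rw [sum_sq_two v x0 μ c, hv, hx0, hvx]; ring
  have h3 : μ^2 * (1 - c^2) ≤ r^2 := by
    rw [hE3] at hsq
    nlinarith [sq_nonneg (c*(1-μ))]
  -- μ ≥ 1 - r
  have hmu : 1 - r ≤ μ := by
    have hray := rayleigh_le X hX.isHermitian μ hmax x0
    rw [hx0, mul_one] at hray
    have hsplit : ∑ i, x0 i * (X.mulVec x0) i
        = ∑ i, x0 i * ((vecMulVec x0 x0).mulVec x0) i
          + ∑ i, x0 i * ((X - vecMulVec x0 x0).mulVec x0) i := by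
      rw [← Finset.sum_add_distrib]
      apply Finset.sum_congr rfl
      intro i _
      rw [Matrix.sub_mulVec]
      simp only [Pi.sub_apply]
      ring
    have hP0 : ∑ i, x0 i * ((vecMulVec x0 x0).mulVec x0) i = 1 := by
      rw [hPz x0]
      have h1 : ∑ j, x0 j * x0 j = 1 := by
        rw [← hx0]; exact Finset.sum_congr rfl fun i _ => by ring
      simp only [h1, one_mul]
    -- Cauchy–Schwarz bound on the error term
    have hCS : |∑ i, x0 i * ((X - vecMulVec x0 x0).mulVec x0) i| ≤ r := by
      have hcs := Finset.sum_mul_sq_le_sq_mul_sq Finset.univ x0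
          ((X - vecMulVec x0 x0).mulVec x0)
      rw [hx0, one_mul] at hcs
      have herr : ∑ i, ((X - vecMulVec x0 x0).mulVec x0 i)^2 ≤ r^2 := by
        have h := mulVec_sq_le (X - vecMulVec x0 x0) x0
        rw [hx0, mul_one] at h
        have : (opNorm (X - vecMulVec x0 x0))^2 ≤ r^2 :=
          pow_le_pow_left₀ (opNorm_nonneg' _) hclose 2
        linarith
      exact abs_le_of_sq_le_sq (le_trans hcs herr) hr0
    have hlow : -r ≤ ∑ i, x0 i * ((X - vecMulVec x0 x0).mulVec x0) i :=
      (abs_le.1 hCS).1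
    linarith [hray, hsplit ▸ hray]
  -- final eigengap bound: 1 - c² ≤ 4 r²
  have h4 : 1 - c^2 ≤ 4 * r^2 := by
    rcases le_or_gt (1/2 : ℝ) r with hr | hr
    · nlinarith [ht0, sq_nonneg c]
    · have hmu2 : (1 - r)^2 * (1 - c^2) ≤ μ^2 * (1 - c^2) := by
        apply mul_le_mul_of_nonneg_right _ ht0
        nlinarith [hmu, hr0]
      have hsq4 : 0 ≤ (1 - 2*r) * (3 - 2*r) * (1 - c^2) :=
        mul_nonneg (mul_nonneg (by linarith) (by linarith)) ht0
      nlinarith [hmu2, h3, hsq4]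
  -- pointwise bound on the rank-one difference
  have hfinal : ∀ z : Fin n → ℝ,
      ∑ i, ((vecMulVec x0 x0 - vecMulVec v v).mulVec z i)^2 ≤ (1 - c^2) * ∑ i, (z i)^2 := by
    intro z
    set a := ∑ j, x0 j * z j with hadef
    set bz := ∑ j, v j * z j with hbdef
    set Z := ∑ i, (z i)^2 with hZdef
    have hZ0 : 0 ≤ Z := Finset.sum_nonneg fun i _ => sq_nonneg _
    have hPQ : (vecMulVec x0 x0 - vecMulVec v v).mulVec z = fun i => a * x0 i - bz * v i := by
      funext i
      rw [Matrix.sub_mulVec]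
      simp only [Pi.sub_apply, hPz z, hQz z, ← hadef, ← hbdef]
    have hq : ∑ i, ((vecMulVec x0 x0 - vecMulVec v v).mulVec z i)^2
        = a^2 + bz^2 - 2*a*bz*c := by
      rw [hPQ, sum_sq_two x0 v a bz, hx0, hv, hcdef]
      ring
    rw [hq]
    rcases eq_or_lt_of_le ht0 with hteq | htpos
    · -- c² = 1 : then v = c • x0
      have hc2 : c^2 = 1 := by linarith
      have hzero : ∑ i, (1 * v i - c * x0 i)^2 = 0 := by rw [hE1]; linarith
      have hvi : ∀ i, v i = c * x0 i := by
        intro i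
        have h := (Finset.sum_eq_zero_iff_of_nonneg
            (fun j _ => sq_nonneg (1 * v j - c * x0 j))).1 hzero i (Finset.mem_univ i)
        have := pow_eq_zero_iff (n := 2) (by norm_num) |>.1 h
        linarith [this]
      have hbza : bz = c * a := by
        rw [hbdef, hadef, Finset.mul_sum]
        exact Finset.sum_congr rfl fun j _ => by rw [hvi j]; ring
      rw [hbza]
      nlinarith [hc2, sq_nonneg a]
    · -- c² < 1 : projection argument
      set α := a - bz * c with hαdef
      set β := bz - a * c with hβdef
      have hexp : ∑ i, ((1 - c^2) * z i - α * x0 i - β * v i)^2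
          = (1 - c^2)^2 * Z + α^2 + β^2
            - 2*(1-c^2)*α * a - 2*(1-c^2)*β * bz + 2*α*β*c := by
        rw [sum_sq_three z x0 v (1 - c^2) α β, hx0, hv]
        have h1 : ∑ i, z i * x0 i = a := by
          rw [hadef]; exact Finset.sum_congr rfl fun j _ => by ring
        have h2 : ∑ i, z i * v i = bz := by
          rw [hbdef]; exact Finset.sum_congr rfl fun j _ => by ring
        rw [h1, h2, hcdef]
        ring
      have hpos : 0 ≤ ∑ i, ((1 - c^2) * z i - α * x0 i - β * v i)^2 :=
        Finset.sum_nonneg fun i _ => sq_nonneg _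
      rw [hexp] at hpos
      have hkey : 0 ≤ (1 - c^2) * ((1 - c^2) * Z - (a^2 + bz^2 - 2*a*bz*c)) := by
        have : (1 - c^2)^2 * Z + α^2 + β^2
            - 2*(1-c^2)*α * a - 2*(1-c^2)*β * bz + 2*α*β*c
            = (1 - c^2) * ((1 - c^2) * Z - (a^2 + bz^2 - 2*a*bz*c)) := by
          rw [hαdef, hβdef]; ring
        linarith [this ▸ hpos]
      by_contra hcon
      push_neg at hcon
      have hneg : (1 - c^2) * ((1 - c^2) * Z - (a^2 + bz^2 - 2*a*bz*c)) < 0 :=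
        mul_neg_of_pos_of_neg htpos (by linarith)
      linarith
  -- conclude
  have h2r : 2 * C0 * ε = 2 * r := by rw [hrdef]; ring
  rw [h2r]
  apply opNorm_le_bound' _ (2*r) (by linarith)
  intro z
  calc ∑ i, ((vecMulVec x0 x0 - vecMulVec v v).mulVec z i)^2
      ≤ (1 - c^2) * ∑ i, (z i)^2 := hfinal z
    _ ≤ (2*r)^2 * ∑ i, (z i)^2 := by
        apply mul_le_mul_of_nonneg_right _ (Finset.sum_nonneg fun i _ => sq_nonneg _)
        nlinarith [h4]
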